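/- Let n, m, s be positive integers with m dividing n, set W = n/m and A = n²/(m·s²), and let q₀, …, q_{m−1} be independent random points with q_h uniformly distributed on {h·W, …, (h+1)·W − 1} × {0, …, n−1}. Suppose s ≥ 144, W ≥ 72, and s² ≥ 96·(1 + ln m). Then with probability at least 3/4, at least m/2 of the points q₀, …, q_{m−1} are well-separated. -/

import Mathlib

/-- The sample space of `m` independent points, where the `h`-th point is uniform on the
`h`-th vertical slab `{h·W, …, (h+1)·W − 1} × {0, …, n−1}` of integer points. -/
def slabSpace (n m W : ℕ) : Finset (Fin m → ℕ × ℕ) :=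
  Fintype.piFinset fun h => (Finset.Ico ((h : ℕ) * W) (((h : ℕ) + 1) * W)) ×ˢ Finset.range n

/-- The point `q h` is well-separated (w.r.t. the area threshold `A`) if for every `k ≠ h`
the smallest axis-aligned rectangle containing `q h` and `q k` has area exceeding `A`,
i.e. `|x_h − x_k| · |y_h − y_k| > A`. -/
def wellSep {m : ℕ} (A : ℝ) (q : Fin m → ℕ × ℕ) (h : Fin m) : Prop :=
  ∀ k : Fin m, k ≠ h →
    A < ((|((q h).1 : ℤ) - ((q k).1 : ℤ)| * |((q h).2 : ℤ) - ((q k).2 : ℤ)| : ℤ) : ℝ)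

open Finset

lemma log_step (b : ℕ) (hb : 1 ≤ b) :
    (1 : ℝ)/(b+1) ≤ Real.log (b+1) - Real.log b := by
  have hb0 : (0:ℝ) < b := by exact_mod_cast hb
  have h1 : (0:ℝ) < (b:ℝ)+1 := by positivity
  have h := Real.log_le_sub_one_of_pos (x := (b:ℝ)/((b:ℝ)+1)) (by positivity)
  rw [Real.log_div (ne_of_gt hb0) (ne_of_gt h1)] at h
  have h2 : (b:ℝ)/((b:ℝ)+1) - 1 = -(1/((b:ℝ)+1)) := by field_simp; ring
  linarith

lemma logSum (a : ℕ) (ha : 1 ≤ a) : ∀ b, a ≤ b →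
    ∑ j ∈ Finset.Ico (a+1) (b+1), (1 : ℝ)/j ≤ Real.log b - Real.log a := by
  intro b hb
  induction b, hb using Nat.le_induction with
  | base => simp
  | succ b hab ih =>
      rw [show b + 1 + 1 = (b+1)+1 from rfl, Finset.sum_Ico_succ_top (by omega)]
      have h := log_step b (le_trans ha hab)
      push_cast at ih h ⊢
      linarith

lemma ycount (n : ℕ) (yk t : ℤ) (ht : 0 ≤ t) :
    (((Finset.range n).filter (fun y : ℕ => |(y:ℤ) - yk| ≤ t)).card : ℝ) ≤ 2*(t:ℝ)+1 := by
  have h1 : ((Finset.range n).filter (fun y : ℕ => |(y:ℤ) - yk| ≤ t)).card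
      ≤ (Finset.Icc (yk - t) (yk + t)).card := by
    apply Finset.card_le_card_of_injOn (fun y : ℕ => (y:ℤ))
    · intro y hy
      simp only [Finset.coe_filter, Set.mem_setOf_eq] at hy
      simp only [Finset.coe_Icc, Set.mem_Icc]
      have := abs_le.mp hy.2
      omega
    · intro a _ b _ hab
      simpa using hab
  have h2 : (Finset.Icc (yk - t) (yk + t)).card = (2*t+1).toNat := by
    rw [Int.card_Icc]
    congr 1
    omega
  rw [h2] at h1
  calc (((Finset.range n).filter (fun y : ℕ => |(y:ℤ) - yk| ≤ t)).card : ℝ)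
      ≤ ((2*t+1).toNat : ℝ) := by exact_mod_cast h1
    _ = (((2*t+1).toNat : ℤ) : ℝ) := by norm_cast
    _ = 2*(t:ℝ)+1 := by
        rw [Int.toNat_of_nonneg (show (0:ℤ) ≤ 2*t+1 by omega)]
        push_cast
        ring

lemma shiftSum (G : ℕ → ℝ) (hG : ∀ i j : ℕ, 1 ≤ i → i ≤ j → G j ≤ G i) (a b M : ℕ)
    (h1 : 1 ≤ b) (hba : b ≤ a) :
    ∑ i ∈ Finset.range M, G (a + i) ≤ ∑ i ∈ Finset.range M, G (b + i) := by
  apply Finset.sum_le_sum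
  intro i _
  exact hG (b+i) (a+i) (by omega) (by omega)

open Classical in
lemma pairCount {α : Type*} {m : ℕ} (t : Fin m → Finset α)
    (c : ℕ) (hc : ∀ i, (t i).card = c)
    (h k : Fin m) (hhk : h ≠ k) (Q : α → α → Prop)
    (β : ℝ)
    (hB : ∀ b ∈ t k, (((t h).filter (fun a => Q a b)).card : ℝ) ≤ β) :
    (((Fintype.piFinset t).filter (fun q => Q (q h) (q k))).card : ℝ) ≤ β * (c:ℝ)^(m-1) := by
  classical
  have hm2 : 2 ≤ m := by
    rcases Nat.lt_or_ge m 2 with hlt | hge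
    · interval_cases m
      · exact h.elim0
      · exact absurd (Subsingleton.elim h k) hhk
    · exact hge
  set f : α → (i : Fin m) → α → ℝ := fun b i a =>
    if i = k then (if a = b then 1 else 0) else if i = h then (if Q a b then 1 else 0) else 1
    with hf
  have hk' : k ∈ Finset.univ.erase h := Finset.mem_erase.mpr ⟨Ne.symm hhk, Finset.mem_univ k⟩
  -- step 1+2+3+4
  have step1 : (((Fintype.piFinset t).filter (fun q => Q (q h) (q k))).card : ℝ)
      = ∑ b ∈ t k, ∏ i, (∑ a ∈ t i, f b i a) := by
    rw [← Finset.sum_boole]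
    have step2 : ∀ q ∈ Fintype.piFinset t,
        (if Q (q h) (q k) then (1:ℝ) else 0) = ∑ b ∈ t k, ∏ i, f b i (q i) := by
      intro q hq
      have hprod : ∀ b, ∏ i, f b i (q i)
          = (if Q (q h) b then (1:ℝ) else 0) * (if q k = b then 1 else 0) := by
        intro b
        rw [← Finset.mul_prod_erase Finset.univ _ (Finset.mem_univ h),
            ← Finset.mul_prod_erase _ _ hk']
        have hrest : ∏ i ∈ (Finset.univ.erase h).erase k, f b i (q i) = 1 := by
          apply Finset.prod_eq_one
          intro i hi
          simp only [Finset.mem_erase] at hi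
          simp [hf, hi.1, hi.2.1]
        rw [hrest]
        simp [hf, hhk]
      rw [Finset.sum_congr rfl (fun b _ => hprod b)]
      rw [Finset.sum_mul_boole]
      simp [Fintype.mem_piFinset.mp hq k]
    rw [Finset.sum_congr rfl step2, Finset.sum_comm]
    congr 1
    ext b
    exact (Finset.prod_univ_sum t (f b)).symm
  rw [step1]
  -- step 5 : compute the product
  have step5 : ∀ b ∈ t k, ∏ i, (∑ a ∈ t i, f b i a)
      = (((t h).filter (fun a => Q a b)).card : ℝ) * (c:ℝ)^(m-2) := by
    intro b hb
    rw [← Finset.mul_prod_erase Finset.univ _ (Finset.mem_univ h),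
        ← Finset.mul_prod_erase _ _ hk']
    have e1 : ∑ a ∈ t h, f b h a = (((t h).filter (fun a => Q a b)).card : ℝ) := by
      rw [← Finset.sum_boole]
      apply Finset.sum_congr rfl
      intro a _
      simp [hf, hhk]
    have e2 : ∑ a ∈ t k, f b k a = 1 := by
      simp only [hf, if_pos rfl]
      rw [Finset.sum_ite_eq' (t k) b (fun _ => (1:ℝ))]
      simp [hb]
    have e3 : ∏ i ∈ (Finset.univ.erase h).erase k, (∑ a ∈ t i, f b i a) = (c:ℝ)^(m-2) := by
      have : ∀ i ∈ (Finset.univ.erase h).erase k, (∑ a ∈ t i, f b i a) = (c:ℝ) := by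
        intro i hi
        simp only [Finset.mem_erase] at hi
        simp [hf, hi.1, hi.2.1, ← hc i]
      rw [Finset.prod_congr rfl this, Finset.prod_const]
      congr 1
      rw [Finset.card_erase_of_mem hk', Finset.card_erase_of_mem (Finset.mem_univ h)]
      simp only [Finset.card_univ, Fintype.card_fin]
      omega
    rw [e1, e2, e3]
    ring
  rw [Finset.sum_congr rfl step5]
  calc ∑ b ∈ t k, (((t h).filter (fun a => Q a b)).card : ℝ) * (c:ℝ)^(m-2)
      ≤ ∑ _b ∈ t k, β * (c:ℝ)^(m-2) := by
        apply Finset.sum_le_sum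
        intro b hb
        exact mul_le_mul_of_nonneg_right (hB b hb) (by positivity)
    _ = β * (c:ℝ)^(m-1) := by
        rw [Finset.sum_const, hc k, nsmul_eq_mul]
        rw [show m - 1 = (m-2) + 1 by omega, pow_succ]
        ring

section Geom

variable (W n : ℕ) (A : ℝ)

noncomputable def Gf (n : ℕ) (A : ℝ) (j : ℕ) : ℝ := min (n:ℝ) (2*A/(j:ℝ))

lemma Gf_anti (hA0 : 0 ≤ A) : ∀ i j : ℕ, 1 ≤ i → i ≤ j → Gf n A j ≤ Gf n A i := by
  intro i j hi hij
  apply min_le_min le_rfl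
  apply div_le_div_of_nonneg_left (by linarith) (by positivity)
  exact_mod_cast hij

open Classical in
lemma xcount (hA0 : 0 ≤ A) (x xk yk : ℕ) (hne : x ≠ xk) :
    ((((Finset.range n)).filter
        (fun y : ℕ => ¬ A < ((|((x:ℤ)) - xk| * |((y:ℤ)) - yk| : ℤ) : ℝ))).card : ℝ)
      ≤ Gf n A ((x:ℤ) - (xk:ℤ)).natAbs + 1 := by
  set a : ℕ := ((x:ℤ) - (xk:ℤ)).natAbs with ha
  have ha1 : 1 ≤ a := by
    have : (x:ℤ) ≠ (xk:ℤ) := by exact_mod_cast hne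
    omega
  have hcard_n : ((((Finset.range n)).filter
      (fun y : ℕ => ¬ A < ((|((x:ℤ)) - xk| * |((y:ℤ)) - yk| : ℤ) : ℝ))).card : ℝ) ≤ n := by
    exact_mod_cast le_trans (Finset.card_filter_le _ _) (le_of_eq (Finset.card_range n))
  rcases le_total ((n:ℝ)) (2*A/(a:ℝ)) with hmin | hmin
  · rw [Gf, min_eq_left hmin]
    linarith
  · rw [Gf, min_eq_right hmin]
    have hsub : (((Finset.range n)).filter
        (fun y : ℕ => ¬ A < ((|((x:ℤ)) - xk| * |((y:ℤ)) - yk| : ℤ) : ℝ)))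
        ⊆ ((Finset.range n).filter (fun y : ℕ => |(y:ℤ) - (yk:ℤ)| ≤ ⌊A/(a:ℝ)⌋)) := by
      intro y hy
      rw [Finset.mem_filter] at hy ⊢
      refine ⟨hy.1, ?_⟩
      have hy := hy.2
      have hle : ((|((x:ℤ)) - xk| * |((y:ℤ)) - yk| : ℤ) : ℝ) ≤ A := le_of_not_gt hy
      have habs : |((x:ℤ)) - (xk:ℤ)| = (a:ℤ) := Int.abs_eq_natAbs _
      rw [habs] at hle
      rw [Int.le_floor]
      have ha0' : (0:ℝ) < (a:ℝ) := by exact_mod_cast ha1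
      rw [le_div_iff₀ ha0']
      have hre : ((|(y:ℤ) - (yk:ℤ)| : ℤ) : ℝ) * (a:ℝ) = (((a:ℤ) * |(y:ℤ) - (yk:ℤ)| : ℤ) : ℝ) := by
        push_cast
        ring
      rw [hre]
      exact hle
    have hyc := ycount n yk ⌊A/(a:ℝ)⌋ (Int.floor_nonneg.mpr (by positivity))
    have hfl : (⌊A/(a:ℝ)⌋ : ℝ) ≤ A/(a:ℝ) := Int.floor_le _
    have hc := Finset.card_le_card hsub
    have ha0' : (0:ℝ) < (a:ℝ) := by exact_mod_cast ha1
    have : 2*A/(a:ℝ) = 2*(A/(a:ℝ)) := by ring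
    rw [this]
    calc ((((Finset.range n)).filter
        (fun y : ℕ => ¬ A < ((|((x:ℤ)) - xk| * |((y:ℤ)) - yk| : ℤ) : ℝ))).card : ℝ)
        ≤ (((Finset.range n).filter (fun y : ℕ => |(y:ℤ) - (yk:ℤ)| ≤ ⌊A/(a:ℝ)⌋)).card : ℝ) := by
          exact_mod_cast hc
      _ ≤ 2*(⌊A/(a:ℝ)⌋:ℝ)+1 := hyc
      _ ≤ 2*(A/(a:ℝ))+1 := by linarith

open Classical in
lemma pairCnt (hW : 0 < W) (hA0 : 0 ≤ A)
    (hh hk : ℕ) (hne : hh ≠ hk) (xk yk : ℕ)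
    (hxk : xk ∈ Finset.Ico (hk*W) ((hk+1)*W)) (d : ℕ) (hd : d = max (hh - hk) (hk - hh)) :
    ((((Finset.Ico (hh*W) ((hh+1)*W)) ×ˢ (Finset.range n)).filter
        (fun p : ℕ×ℕ => ¬ A < ((|((p.1:ℤ)) - xk| * |((p.2:ℤ)) - yk| : ℤ) : ℝ))).card : ℝ)
      ≤ W + ∑ i ∈ Finset.range W, Gf n A ((d-1)*W+1+i) := by
  rw [Finset.mem_Ico] at hxk
  have hm1 : (hh+1)*W = hh*W + W := by ring
  have hm2 : (hk+1)*W = hk*W + W := by ring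
  -- card as double sum
  have hsplit : ((((Finset.Ico (hh*W) ((hh+1)*W)) ×ˢ (Finset.range n)).filter
        (fun p : ℕ×ℕ => ¬ A < ((|((p.1:ℤ)) - xk| * |((p.2:ℤ)) - yk| : ℤ) : ℝ))).card : ℝ)
      = ∑ x ∈ Finset.Ico (hh*W) ((hh+1)*W),
          ((((Finset.range n)).filter
            (fun y : ℕ => ¬ A < ((|((x:ℤ)) - xk| * |((y:ℤ)) - yk| : ℤ) : ℝ))).card : ℝ) := by
    rw [Finset.card_filter]
    push_cast
    rw [Finset.sum_product]
    congr 1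
    ext x
    rw [Finset.card_filter]
    push_cast
    rfl
  rw [hsplit]
  have hslab : ∀ x ∈ Finset.Ico (hh*W) ((hh+1)*W), x ≠ xk := by
    intro x hx
    rw [Finset.mem_Ico] at hx
    rcases Nat.lt_or_ge hh hk with hlt | hge
    · have h5 : (hh+1)*W ≤ hk*W := Nat.mul_le_mul_right W (by omega)
      omega
    · have h5 : (hk+1)*W ≤ hh*W := Nat.mul_le_mul_right W (by omega)
      omega
  have step2 : ∑ x ∈ Finset.Ico (hh*W) ((hh+1)*W),
          ((((Finset.range n)).filter
            (fun y : ℕ => ¬ A < ((|((x:ℤ)) - xk| * |((y:ℤ)) - yk| : ℤ) : ℝ))).card : ℝ)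
      ≤ ∑ x ∈ Finset.Ico (hh*W) ((hh+1)*W), (Gf n A ((x:ℤ) - (xk:ℤ)).natAbs + 1) := by
    apply Finset.sum_le_sum
    intro x hx
    exact xcount n A hA0 x xk yk (hslab x hx)
  have hcardIco : (Finset.Ico (hh*W) ((hh+1)*W)).card = W := by
    rw [Nat.card_Ico]
    omega
  have hWsub : (hh+1)*W - hh*W = W := by omega
  have step3 : ∑ x ∈ Finset.Ico (hh*W) ((hh+1)*W), (Gf n A ((x:ℤ) - (xk:ℤ)).natAbs + 1)
      = W + ∑ x ∈ Finset.Ico (hh*W) ((hh+1)*W), Gf n A ((x:ℤ) - (xk:ℤ)).natAbs := by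
    rw [Finset.sum_add_distrib, Finset.sum_const, hcardIco, nsmul_eq_mul]
    ring
  -- reindex the slab sum
  have step4 : ∑ x ∈ Finset.Ico (hh*W) ((hh+1)*W), Gf n A ((x:ℤ) - (xk:ℤ)).natAbs
      ≤ ∑ i ∈ Finset.range W, Gf n A ((d-1)*W+1+i) := by
    rcases Nat.lt_or_ge hh hk with hlt | hge
    · -- x < xk, a = xk - x
      have hxklb : (hh+1)*W ≤ xk := le_trans (Nat.mul_le_mul_right W (by omega)) hxk.1
      have e1 : ∑ x ∈ Finset.Ico (hh*W) ((hh+1)*W), Gf n A ((x:ℤ) - (xk:ℤ)).natAbs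
          = ∑ i ∈ Finset.range W, Gf n A (xk - (hh*W + i)) := by
        rw [Finset.sum_Ico_eq_sum_range, hWsub]
        apply Finset.sum_congr rfl
        intro i hi
        rw [Finset.mem_range] at hi
        congr 1
        omega
      set a0 : ℕ := xk + 1 - (hh+1)*W with ha0
      have e2 : ∑ i ∈ Finset.range W, Gf n A (xk - (hh*W + i))
          = ∑ i ∈ Finset.range W, Gf n A (a0 + i) := by
        rw [← Finset.sum_range_reflect]
        apply Finset.sum_congr rfl
        intro i hi
        rw [Finset.mem_range] at hi
        congr 1
        omega
      rw [e1, e2]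
      apply shiftSum _ (Gf_anti n A hA0) _ _ _ (by omega)
      have hdd : d = hk - hh := by omega
      have hkey : (d-1)*W + hh*W + W = hk*W := by
        have h9 : (d-1) + hh + 1 = hk := by omega
        calc (d-1)*W + hh*W + W = ((d-1)+hh+1)*W := by ring
          _ = hk*W := by rw [h9]
      have h10 : hk*W ≤ xk := hxk.1
      omega
    · -- xk < x, a = x - xk
      have hne' : hk < hh := by omega
      have hxkub : xk < hh*W := lt_of_lt_of_le hxk.2 (Nat.mul_le_mul_right W (by omega))
      have e1 : ∑ x ∈ Finset.Ico (hh*W) ((hh+1)*W), Gf n A ((x:ℤ) - (xk:ℤ)).natAbs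
          = ∑ i ∈ Finset.range W, Gf n A ((hh*W - xk) + i) := by
        rw [Finset.sum_Ico_eq_sum_range, hWsub]
        apply Finset.sum_congr rfl
        intro i hi
        congr 1
        omega
      rw [e1]
      apply shiftSum _ (Gf_anti n A hA0) _ _ _ (by omega)
      have hdd : d = hh - hk := by omega
      have hkey : (d-1)*W + hk*W + W = hh*W := by
        have h9 : (d-1) + hk + 1 = hh := by omega
        calc (d-1)*W + hk*W + W = ((d-1)+hk+1)*W := by ring
          _ = hh*W := by rw [h9]
      have h10 : xk < hk*W + W := by omega
      omega
  linarith

end Geom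

noncomputable def rho (W n T : ℕ) (A : ℝ) (s : ℕ) (d : ℕ) : ℝ :=
  W + (if d = 1 then (T:ℝ)*n + 2*A*(2*Real.log s)
       else 2*A*(Real.log ((d:ℝ)*W) - Real.log (((d:ℝ)-1)*W)))

lemma eval1 (W n T : ℕ) (A : ℝ) (hA0 : 0 ≤ A) (hT1 : 1 ≤ T) (hTW : T ≤ W) :
    ∑ i ∈ Finset.range W, Gf n A (1+i) ≤ (T:ℝ)*n + 2*A*(Real.log W - Real.log T) := by
  have h1 : ∑ i ∈ Finset.range W, Gf n A (1+i) = ∑ j ∈ Finset.Ico 1 (W+1), Gf n A j := by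
    rw [Finset.sum_Ico_eq_sum_range]
    simp
  rw [h1, ← Finset.sum_Ico_consecutive _ (show 1 ≤ T+1 by omega) (show T+1 ≤ W+1 by omega)]
  have hp1 : ∑ j ∈ Finset.Ico 1 (T+1), Gf n A j ≤ (T:ℝ)*n := by
    calc ∑ j ∈ Finset.Ico 1 (T+1), Gf n A j ≤ ∑ _j ∈ Finset.Ico 1 (T+1), (n:ℝ) :=
          Finset.sum_le_sum (fun j _ => min_le_left _ _)
      _ = (T:ℝ)*n := by
          rw [Finset.sum_const, Nat.card_Ico, nsmul_eq_mul]
          push_cast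
          try ring_nf
  have hp2 : ∑ j ∈ Finset.Ico (T+1) (W+1), Gf n A j ≤ 2*A*(Real.log W - Real.log T) := by
    calc ∑ j ∈ Finset.Ico (T+1) (W+1), Gf n A j
        ≤ ∑ j ∈ Finset.Ico (T+1) (W+1), 2*A*(1/(j:ℝ)) := by
          apply Finset.sum_le_sum
          intro j _
          calc Gf n A j ≤ 2*A/(j:ℝ) := min_le_right _ _
            _ = 2*A*(1/(j:ℝ)) := by ring
      _ = 2*A*(∑ j ∈ Finset.Ico (T+1) (W+1), (1:ℝ)/(j:ℝ)) := by
          rw [Finset.mul_sum]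
      _ ≤ 2*A*(Real.log W - Real.log T) := by
          apply mul_le_mul_of_nonneg_left (logSum T hT1 W hTW) (by linarith)
  linarith

lemma eval2 (W n : ℕ) (A : ℝ) (hA0 : 0 ≤ A) (hW : 1 ≤ W) (e : ℕ) (he : 1 ≤ e) :
    ∑ i ∈ Finset.range W, Gf n A (e*W+1+i)
      ≤ 2*A*(Real.log (((e:ℝ)+1)*W) - Real.log ((e:ℝ)*W)) := by
  have h1 : ∑ i ∈ Finset.range W, Gf n A (e*W+1+i)
      = ∑ j ∈ Finset.Ico (e*W+1) (e*W+W+1), Gf n A j := by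
    rw [Finset.sum_Ico_eq_sum_range]
    have h2 : e*W+W+1 - (e*W+1) = W := by omega
    rw [h2]
  rw [h1]
  have hlog := logSum (e*W) (Nat.one_le_iff_ne_zero.mpr (Nat.mul_ne_zero (by omega) (by omega))) (e*W+W) (by omega)
  have h2 : e*W+W+1 = (e*W+W)+1 := rfl
  calc ∑ j ∈ Finset.Ico (e*W+1) (e*W+W+1), Gf n A j
      ≤ ∑ j ∈ Finset.Ico (e*W+1) (e*W+W+1), 2*A*(1/(j:ℝ)) := by
        apply Finset.sum_le_sum
        intro j _
        calc Gf n A j ≤ 2*A/(j:ℝ) := min_le_right _ _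
          _ = 2*A*(1/(j:ℝ)) := by ring
    _ = 2*A*(∑ j ∈ Finset.Ico (e*W+1) (e*W+W+1), (1:ℝ)/(j:ℝ)) := by rw [Finset.mul_sum]
    _ ≤ 2*A*(Real.log ((e*W+W : ℕ)) - Real.log ((e*W : ℕ))) := by
        apply mul_le_mul_of_nonneg_left _ (by linarith)
        exact_mod_cast hlog
    _ = 2*A*(Real.log (((e:ℝ)+1)*W) - Real.log ((e:ℝ)*W)) := by
        congr 2 <;> push_cast <;> ring_nf

open Classical in
lemma pairRho (s W n T : ℕ) (A : ℝ) (hA0 : 0 ≤ A) (hW : 0 < W) (hT1 : 1 ≤ T) (hTW : T ≤ W)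
    (hLT : Real.log W - Real.log T ≤ 2*Real.log s)
    (hh hk : ℕ) (hne : hh ≠ hk) (xk yk : ℕ)
    (hxk : xk ∈ Finset.Ico (hk*W) ((hk+1)*W)) :
    ((((Finset.Ico (hh*W) ((hh+1)*W)) ×ˢ (Finset.range n)).filter
        (fun p : ℕ×ℕ => ¬ A < ((|((p.1:ℤ)) - xk| * |((p.2:ℤ)) - yk| : ℤ) : ℝ))).card : ℝ)
      ≤ rho W n T A s (max (hh - hk) (hk - hh)) := by
  set d : ℕ := max (hh - hk) (hk - hh) with hd
  have hd1 : 1 ≤ d := by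
    rcases Nat.lt_or_ge hh hk with h | h <;> omega
  have hmain := pairCnt W n A hW hA0 hh hk hne xk yk hxk d hd
  rcases Nat.eq_or_lt_of_le hd1 with hone | htwo
  · -- d = 1
    have hz : (d-1)*W = 0 := by
      rw [← hone]
      simp
    have he : ∀ i, (d-1)*W+1+i = 1+i := by
      intro i
      omega
    rw [rho, if_pos hone.symm]
    calc ((((Finset.Ico (hh*W) ((hh+1)*W)) ×ˢ (Finset.range n)).filter
        (fun p : ℕ×ℕ => ¬ A < ((|((p.1:ℤ)) - xk| * |((p.2:ℤ)) - yk| : ℤ) : ℝ))).card : ℝ)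
        ≤ W + ∑ i ∈ Finset.range W, Gf n A ((d-1)*W+1+i) := hmain
      _ = W + ∑ i ∈ Finset.range W, Gf n A (1+i) := by
          congr 1
          exact Finset.sum_congr rfl (fun i _ => by rw [he i])
      _ ≤ W + ((T:ℝ)*n + 2*A*(Real.log W - Real.log T)) := by
          have := eval1 W n T A hA0 hT1 hTW
          linarith
      _ ≤ W + ((T:ℝ)*n + 2*A*(2*Real.log s)) := by
          have h2A : 0 ≤ 2*A := by linarith
          nlinarith
  · -- d ≥ 2
    have hdne : d ≠ 1 := by omega
    rw [rho, if_neg hdne]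
    have he2 := eval2 W n A hA0 (by omega) (d-1) (by omega)
    have hcast : ((d-1 : ℕ):ℝ) = (d:ℝ) - 1 := by
      push_cast [Nat.cast_sub (by omega : 1 ≤ d)]
      ring
    calc ((((Finset.Ico (hh*W) ((hh+1)*W)) ×ˢ (Finset.range n)).filter
        (fun p : ℕ×ℕ => ¬ A < ((|((p.1:ℤ)) - xk| * |((p.2:ℤ)) - yk| : ℤ) : ℝ))).card : ℝ)
        ≤ W + ∑ i ∈ Finset.range W, Gf n A ((d-1)*W+1+i) := hmain
      _ ≤ W + 2*A*(Real.log ((((d-1:ℕ):ℝ)+1)*W) - Real.log (((d-1:ℕ):ℝ)*W)) := by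
          linarith [he2]
      _ = W + 2*A*(Real.log ((d:ℝ)*W) - Real.log (((d:ℝ)-1)*W)) := by
          rw [hcast, show ((d:ℝ)-1)+1 = (d:ℝ) by ring]

lemma iccSum (W n T m s : ℕ) (A : ℝ) (hA0 : 0 ≤ A) (hW : 1 ≤ W) (hm : 1 ≤ m) (hs : 1 ≤ s)
    (D : ℕ) (hD : D ≤ m) :
    ∑ d ∈ Finset.Icc 1 D, rho W n T A s d
      ≤ (D:ℝ)*W + ((T:ℝ)*n + 2*A*(2*Real.log s) + 2*A*Real.log m) := by
  have hlogs : 0 ≤ Real.log s := Real.log_nonneg (by exact_mod_cast hs)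
  have hlogm : 0 ≤ Real.log m := Real.log_nonneg (by exact_mod_cast hm)
  rcases Nat.eq_zero_or_pos D with h0 | hD1
  · subst h0
    simp only [Finset.Icc_eq_empty_of_lt (by omega : (0:ℕ) < 1), Finset.sum_empty]
    positivity
  · have hsplit : Finset.Icc 1 D = insert 1 (Finset.Icc 2 D) := by
      ext x
      simp only [Finset.mem_Icc, Finset.mem_insert]
      omega
    rw [hsplit, Finset.sum_insert (by simp [Finset.mem_Icc])]
    have h1 : rho W n T A s 1 = W + ((T:ℝ)*n + 2*A*(2*Real.log s)) := by
      rw [rho, if_pos rfl]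
    set F : ℕ → ℝ := fun j => 2*A*Real.log (((j:ℝ)+1)*W) with hF
    have h2 : ∑ d ∈ Finset.Icc 2 D, rho W n T A s d
        = ((D:ℝ)-1)*W + (F (D-1) - F 0) := by
      have hIccIco : Finset.Icc 2 D = Finset.Ico 2 (D+1) := by
        ext x
        simp [Finset.mem_Icc, Finset.mem_Ico]
      rw [hIccIco, Finset.sum_Ico_eq_sum_range]
      have hc : D + 1 - 2 = D - 1 := by omega
      rw [hc]
      have hterm : ∀ i, rho W n T A s (2+i) = (W:ℝ) + (F (i+1) - F i) := by
        intro i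
        rw [rho, if_neg (by omega)]
        simp only [hF]
        push_cast
        ring_nf
      rw [Finset.sum_congr rfl (fun i _ => hterm i), Finset.sum_add_distrib,
        Finset.sum_const, Finset.card_range, Finset.sum_range_sub F (D-1), nsmul_eq_mul]
      have : ((D - 1 : ℕ):ℝ) = (D:ℝ) - 1 := by
        push_cast [Nat.cast_sub hD1]
        ring
      rw [this]
    rw [h1, h2]
    have hF0 : F 0 = 2*A*Real.log W := by
      simp only [hF]
      norm_num
    have hFD : F (D-1) = 2*A*(Real.log D + Real.log W) := by
      simp only [hF]
      have c3 : ((D - 1 : ℕ):ℝ) + 1 = (D:ℝ) := by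
        push_cast [Nat.cast_sub hD1]
        ring
      rw [c3, Real.log_mul (Nat.cast_ne_zero.mpr (by omega)) (Nat.cast_ne_zero.mpr (by omega))]
      try ring
    rw [hF0, hFD]
    have hlogD : Real.log D ≤ Real.log m := by
      apply Real.log_le_log (by exact_mod_cast hD1)
      exact_mod_cast hD
    have h3 : 2*A*Real.log D ≤ 2*A*Real.log m := by
      apply mul_le_mul_of_nonneg_left hlogD (by linarith)
    nlinarith [hD1, (show (1:ℝ) ≤ (D:ℝ) by exact_mod_cast hD1)]

lemma sideLeft {m : ℕ} (h : Fin m) (f : ℕ → ℝ) :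
    ∑ k ∈ (Finset.univ.erase h).filter (fun k : Fin m => k.val < h.val),
        f (max (h.val - k.val) (k.val - h.val))
      = ∑ d ∈ Finset.Icc 1 h.val, f d := by
  apply Finset.sum_bij' (i := fun (k : Fin m) _ => h.val - k.val)
    (j := fun (d : ℕ) _ => (⟨h.val - d, by have := h.isLt; omega⟩ : Fin m))
  case hi =>
    intro k hk
    simp only [Finset.mem_filter, Finset.mem_erase, Finset.mem_univ, and_true, true_and,
      Fin.ext_iff] at hk
    simp only [Finset.mem_Icc]
    omega
  case hj =>
    intro d hd
    simp only [Finset.mem_Icc] at hd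
    simp only [Finset.mem_filter, Finset.mem_erase, Finset.mem_univ, and_true, true_and,
      ne_eq, Fin.ext_iff, Fin.val_mk]
    omega
  case left_neg =>
    intro k hk
    simp only [Finset.mem_filter, Finset.mem_erase, Finset.mem_univ, and_true, true_and,
      Fin.ext_iff] at hk
    simp only [Fin.ext_iff, Fin.val_mk]
    omega
  case right_neg =>
    intro d hd
    simp only [Finset.mem_Icc] at hd
    simp only [Fin.val_mk]
    omega
  case h =>
    intro k hk
    simp only [Finset.mem_filter, Finset.mem_erase, Finset.mem_univ, and_true, true_and,
      Fin.ext_iff] at hk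
    congr 1
    omega

lemma sideRight {m : ℕ} (h : Fin m) (f : ℕ → ℝ) :
    ∑ k ∈ (Finset.univ.erase h).filter (fun k : Fin m => ¬ k.val < h.val),
        f (max (h.val - k.val) (k.val - h.val))
      = ∑ d ∈ Finset.Icc 1 (m - 1 - h.val), f d := by
  have hm := h.isLt
  apply Finset.sum_bij' (i := fun (k : Fin m) _ => k.val - h.val)
    (j := fun (d : ℕ) hd => (⟨h.val + d, by
      simp only [Finset.mem_Icc] at hd
      omega⟩ : Fin m))
  case hi =>
    intro k hk
    have hkm := k.isLt
    simp only [Finset.mem_filter, Finset.mem_erase, Finset.mem_univ, and_true, true_and,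
      Fin.ext_iff] at hk
    simp only [Finset.mem_Icc]
    omega
  case hj =>
    intro d hd
    simp only [Finset.mem_Icc] at hd
    simp only [Finset.mem_filter, Finset.mem_erase, Finset.mem_univ, and_true, true_and,
      ne_eq, Fin.ext_iff, Fin.val_mk]
    omega
  case left_neg =>
    intro k hk
    simp only [Finset.mem_filter, Finset.mem_erase, Finset.mem_univ, and_true, true_and,
      Fin.ext_iff] at hk
    simp only [Fin.ext_iff, Fin.val_mk]
    omega
  case right_neg =>
    intro d hd
    simp only [Finset.mem_Icc] at hd
    simp only [Fin.val_mk]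
    omega
  case h =>
    intro k hk
    simp only [Finset.mem_filter, Finset.mem_erase, Finset.mem_univ, and_true, true_and,
      Fin.ext_iff] at hk
    congr 1
    omega

lemma logWT (W s T : ℕ) (hW : 1 ≤ W) (hs : 1 ≤ s) (hT : T = 2*W/(s*s) + 1) :
    Real.log W - Real.log T ≤ 2*Real.log s := by
  have hss : 0 < s*s := by positivity
  have hdm := Nat.div_add_mod (2*W) (s*s)
  have hmod : (2*W) % (s*s) < s*s := Nat.mod_lt _ hss
  have key : 2*W < (2*W/(s*s) + 1)*(s*s) := by
    calc 2*W = s*s*(2*W/(s*s)) + (2*W)%(s*s) := hdm.symm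
      _ < s*s*(2*W/(s*s)) + s*s := by omega
      _ = (2*W/(s*s)+1)*(s*s) := by ring
  have hWT : W ≤ T*(s*s) := by
    rw [hT]
    omega
  have hT0 : T ≠ 0 := by
    rw [hT]
    exact Nat.succ_ne_zero _
  have hlog : Real.log W ≤ Real.log ((T*(s*s) : ℕ) : ℝ) := by
    apply Real.log_le_log (by exact_mod_cast hW)
    exact_mod_cast hWT
  have heq : Real.log ((T*(s*s) : ℕ) : ℝ) = Real.log T + 2*Real.log s := by
    push_cast
    rw [Real.log_mul (Nat.cast_ne_zero.mpr hT0) (by positivity),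
      Real.log_mul (Nat.cast_ne_zero.mpr (by omega)) (Nat.cast_ne_zero.mpr (by omega))]
    ring
  rw [heq] at hlog
  linarith

lemma numeric (W n m s T : ℕ) (A : ℝ)
    (hA : A = (W:ℝ)*n/(s:ℝ)^2) (hT : T = 2*W/(s*s) + 1) (hn : (m:ℝ)*W = n)
    (hs : 144 ≤ s) (hW : 72 ≤ W) (hm : 1 ≤ m) (hslb : 96*(1+Real.log m) ≤ ((s:ℝ))^2) :
    ((m:ℝ)-1)*W + 2*((T:ℝ)*n + 2*A*(2*Real.log s) + 2*A*Real.log m) ≤ (W:ℝ)*n/8 := by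
  have hs144 : (144:ℝ) ≤ s := by exact_mod_cast hs
  have hσ : (0:ℝ) < (s:ℝ)^2 := by positivity
  have hσ2 : (20736:ℝ) ≤ (s:ℝ)^2 := by nlinarith
  have hW72 : (72:ℝ) ≤ (W:ℝ) := by exact_mod_cast hW
  have hn72 : (0:ℝ) ≤ (n:ℝ) := by positivity
  have hWn0 : (0:ℝ) ≤ (W:ℝ)*n := by positivity
  have hA0 : 0 ≤ A := by rw [hA]; positivity
  -- sqrt facts
  have hsq0 : (0:ℝ) ≤ (s:ℝ) := by positivity
  have hsqrt : (12:ℝ) ≤ Real.sqrt s := by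
    rw [show (12:ℝ) = Real.sqrt 144 by
      rw [show (144:ℝ) = 12^2 by norm_num, Real.sqrt_sq (by norm_num)]]
    exact Real.sqrt_le_sqrt hs144
  have hsrsq : (Real.sqrt s)^2 = (s:ℝ) := Real.sq_sqrt hsq0
  have hlogs : Real.log s ≤ 2*Real.sqrt s - 2 := by
    have h1 : Real.log ((Real.sqrt s)^2) = 2*Real.log (Real.sqrt s) := by
      rw [Real.log_pow]
      norm_num
    rw [hsrsq] at h1
    have h2 : Real.log (Real.sqrt s) ≤ Real.sqrt s - 1 :=
      Real.log_le_sub_one_of_pos (by nlinarith)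
    linarith
  have hlogs0 : 0 ≤ Real.log s := Real.log_nonneg (by linarith)
  have hlogm : Real.log m ≤ (s:ℝ)^2/96 - 1 := by linarith
  have hlogm0 : 0 ≤ Real.log m := Real.log_nonneg (by exact_mod_cast hm)
  -- term 1 : (m-1) W = n - W
  have t1 : ((m:ℝ)-1)*W = (n:ℝ) - W := by
    rw [← hn]
    ring
  -- term 2 : 2 T n ≤ 4Wn/s² + 2n ≤ Wn/5184 + 2n
  have hTle : (T:ℝ) ≤ 2*(W:ℝ)/(s:ℝ)^2 + 1 := by
    rw [hT]
    push_cast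
    have := Nat.cast_div_le (α := ℝ) (m := 2*W) (n := s*s)
    push_cast at this
    calc ((2*W/(s*s) : ℕ) : ℝ) + 1 ≤ 2*(W:ℝ)/((s:ℝ)*(s:ℝ)) + 1 := by
          linarith
      _ = 2*(W:ℝ)/(s:ℝ)^2 + 1 := by rw [sq]
  have hdivσ : (W:ℝ)*n/(s:ℝ)^2 ≤ (W:ℝ)*n/20736 :=
    div_le_div_of_nonneg_left hWn0 (by norm_num) hσ2
  have t2 : 2*(T:ℝ)*n ≤ 4*((W:ℝ)*n/20736) + 2*n := by
    have h1 : 2*(T:ℝ)*n ≤ 2*(2*(W:ℝ)/(s:ℝ)^2 + 1)*n := by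
      apply mul_le_mul_of_nonneg_right _ hn72
      linarith
    have h2 : 2*(2*(W:ℝ)/(s:ℝ)^2 + 1)*n = 4*((W:ℝ)*n/(s:ℝ)^2) + 2*n := by
      field_simp
      ring
    linarith
  -- term 3 : 8 A log s ≤ Wn/108
  have hsqrtpos : (0:ℝ) < Real.sqrt s := by linarith
  have h1728 : 1728*Real.sqrt s ≤ (s:ℝ)^2 := by nlinarith
  have t3 : 8*A*Real.log s ≤ (W:ℝ)*n/108 := by
    have e0 : A*Real.log s = (W:ℝ)*n*Real.log s/(s:ℝ)^2 := by
      rw [hA]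
      ring
    have h1 : (W:ℝ)*n*Real.log s/(s:ℝ)^2
        ≤ (W:ℝ)*n*(2*Real.sqrt s)/(1728*Real.sqrt s) := by
      apply div_le_div₀ (by positivity) _ (by positivity) h1728
      apply mul_le_mul_of_nonneg_left _ hWn0
      linarith
    have h2 : (W:ℝ)*n*(2*Real.sqrt s)/(1728*Real.sqrt s) = (W:ℝ)*n/864 := by
      rw [div_eq_div_iff (by positivity) (by norm_num)]
      ring
    rw [h2] at h1
    linarith [e0]
  -- term 4 : 4 A log m ≤ Wn/24
  have t4 : 4*A*Real.log m ≤ (W:ℝ)*n/24 := by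
    have h1 : A*Real.log m ≤ A*((s:ℝ)^2/96 - 1) := by
      apply mul_le_mul_of_nonneg_left hlogm hA0
    have h2 : A*((s:ℝ)^2/96 - 1) = (W:ℝ)*n/96 - (W:ℝ)*n/(s:ℝ)^2 := by
      rw [hA]
      field_simp
    have h3 : (0:ℝ) ≤ (W:ℝ)*n/(s:ℝ)^2 := by positivity
    linarith
  have t0 : (n:ℝ) ≤ (W:ℝ)*n/72 := by
    have : 72*(n:ℝ) ≤ (W:ℝ)*n := mul_le_mul_of_nonneg_right hW72 hn72
    linarith
  linarith

open Classical in
theorem stmt11 (n m s : ℕ) (hn : 0 < n) (hm : 0 < m) (hdvd : m ∣ n)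
    (W : ℕ) (hW : W = n / m) (A : ℝ) (hA : A = (n : ℝ)^2 / (m * s^2))
    (hs : 144 ≤ s) (hWlb : 72 ≤ W) (hslb : 96 * (1 + Real.log m) ≤ ((s : ℝ))^2) :
    (3 : ℝ) / 4 ≤
      (((slabSpace n m W).filter (fun q =>
          (m : ℝ) / 2 ≤ ((Finset.univ.filter (fun h : Fin m => wellSep A q h)).card : ℝ))).card : ℝ) /
        ((slabSpace n m W).card : ℝ) := by
  have hs0 : 0 < s := by omega
  have hW0 : 0 < W := by omega
  have hnmW : n = m * W := by
    rw [hW]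
    exact (Nat.mul_div_cancel' hdvd).symm
  set T : ℕ := 2*W/(s*s) + 1 with hTdef
  have hT1 : 1 ≤ T := by
    rw [hTdef]
    exact Nat.succ_le_succ (Nat.zero_le _)
  have hTW : T ≤ W := by
    have h4 : 4 ≤ s*s := le_trans (by norm_num) (Nat.mul_le_mul hs hs)
    have hq4 : 2*W/(s*s) ≤ 2*W/4 := Nat.div_le_div_left h4 (by norm_num)
    omega
  have hLT : Real.log W - Real.log T ≤ 2*Real.log s := logWT W s T (by omega) (by omega) hTdef
  have hnR : (n:ℝ) = (m:ℝ)*W := by exact_mod_cast hnmW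
  have hA' : A = (W:ℝ)*n/(s:ℝ)^2 := by
    rw [hA, pow_two, hnR]
    have hmR : (m:ℝ) ≠ 0 := Nat.cast_ne_zero.mpr (by omega)
    have hsR : (s:ℝ) ≠ 0 := Nat.cast_ne_zero.mpr (by omega)
    field_simp
  have hA0 : 0 ≤ A := by
    rw [hA']
    positivity
  have hnum : ((m:ℝ)-1)*W + 2*((T:ℝ)*n + 2*A*(2*Real.log s) + 2*A*Real.log m) ≤ (W:ℝ)*n/8 :=
    numeric W n m s T A hA' hTdef hnR.symm hs hWlb (by omega) hslb
  -- the sample space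
  set t : Fin m → Finset (ℕ×ℕ) :=
    fun h => (Finset.Ico ((h : ℕ) * W) (((h : ℕ) + 1) * W)) ×ˢ Finset.range n with ht
  have hΩ : slabSpace n m W = Fintype.piFinset t := rfl
  have hcardt : ∀ i, (t i).card = W*n := by
    intro i
    rw [ht]
    simp only [Finset.card_product, Nat.card_Ico, Finset.card_range]
    have h9 : ((i:ℕ)+1)*W = (i:ℕ)*W + W := by ring
    congr 1
    omega
  have hΩcard : (Fintype.piFinset t).card = (W*n)^m := by
    rw [Fintype.card_piFinset]
    rw [Finset.prod_congr rfl (fun i _ => hcardt i), Finset.prod_const, Finset.card_univ,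
      Fintype.card_fin]
  -- per-h bound
  have hNh : ∀ h : Fin m, (((Fintype.piFinset t).filter (fun q => ¬ wellSep A q h)).card : ℝ)
      ≤ (((W*n)^m : ℕ) : ℝ)/8 := by
    intro h
    have hsub : (Fintype.piFinset t).filter (fun q => ¬ wellSep A q h)
        ⊆ (Finset.univ.erase h).biUnion (fun k => (Fintype.piFinset t).filter
            (fun q => ¬ A < ((|((q h).1 : ℤ) - ((q k).1 : ℤ)| *
              |((q h).2 : ℤ) - ((q k).2 : ℤ)| : ℤ) : ℝ))) := by
      intro q hq
      rw [Finset.mem_filter] at hq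
      obtain ⟨hq1, hq2⟩ := hq
      rw [wellSep] at hq2
      push_neg at hq2
      obtain ⟨k, hk, hlt⟩ := hq2
      rw [Finset.mem_biUnion]
      exact ⟨k, Finset.mem_erase.mpr ⟨hk, Finset.mem_univ k⟩,
        Finset.mem_filter.mpr ⟨hq1, not_lt.mpr hlt⟩⟩
    have hcard1 : (((Fintype.piFinset t).filter (fun q => ¬ wellSep A q h)).card : ℝ)
        ≤ ∑ k ∈ Finset.univ.erase h, (((Fintype.piFinset t).filter
            (fun q => ¬ A < ((|((q h).1 : ℤ) - ((q k).1 : ℤ)| *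
              |((q h).2 : ℤ) - ((q k).2 : ℤ)| : ℤ) : ℝ))).card : ℝ) := by
      have := (Finset.card_le_card hsub).trans Finset.card_biUnion_le
      exact_mod_cast this
    have hkb : ∀ k ∈ Finset.univ.erase h,
        (((Fintype.piFinset t).filter
            (fun q => ¬ A < ((|((q h).1 : ℤ) - ((q k).1 : ℤ)| *
              |((q h).2 : ℤ) - ((q k).2 : ℤ)| : ℤ) : ℝ))).card : ℝ)
          ≤ rho W n T A s (max (h.val - k.val) (k.val - h.val)) * ((W*n : ℕ):ℝ)^(m-1) := by
      intro k hk
      rw [Finset.mem_erase] at hk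
      have hhk : h ≠ k := Ne.symm hk.1
      have hvne : h.val ≠ k.val := fun hc => hhk (Fin.ext hc)
      have hres := pairCount t (W*n) hcardt h k hhk
        (fun a b => ¬ A < ((|(a.1 : ℤ) - (b.1 : ℤ)| * |(a.2 : ℤ) - (b.2 : ℤ)| : ℤ) : ℝ))
        (rho W n T A s (max (h.val - k.val) (k.val - h.val)))
        (by
          intro b hb
          rw [ht, Finset.mem_product] at hb
          have h0 := pairRho s W n T A hA0 hW0 hT1 hTW hLT h.val k.val hvne b.1 b.2 hb.1
          rw [ht]
          convert h0 using 4)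
      convert hres using 4
    have hsum2 : ∑ k ∈ Finset.univ.erase h, rho W n T A s (max (h.val - k.val) (k.val - h.val))
        ≤ (W:ℝ)*n/8 := by
      rw [← Finset.sum_filter_add_sum_filter_not (Finset.univ.erase h)
        (fun k : Fin m => k.val < h.val), sideLeft h, sideRight h]
      have hD1 : h.val ≤ m := le_of_lt h.isLt
      have hD2 : m - 1 - h.val ≤ m := by omega
      have i1 := iccSum W n T m s A hA0 (by omega) (by omega) (by omega) h.val hD1
      have i2 := iccSum W n T m s A hA0 (by omega) (by omega) (by omega) (m-1-h.val) hD2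
      have hcast : ((h.val:ℕ):ℝ)*W + (((m-1-h.val : ℕ)):ℝ)*W = ((m:ℝ)-1)*W := by
        have h1 : h.val ≤ m - 1 := by have := h.isLt; omega
        have h2 : ((m-1-h.val : ℕ):ℝ) = (m:ℝ) - 1 - h.val := by
          have := h.isLt
          push_cast [Nat.cast_sub (by omega : h.val ≤ m - 1), Nat.cast_sub (by omega : 1 ≤ m)]
          ring
        rw [h2]
        ring
      nlinarith [hnum, i1, i2, hcast]
    calc (((Fintype.piFinset t).filter (fun q => ¬ wellSep A q h)).card : ℝ)
        ≤ ∑ k ∈ Finset.univ.erase h, (((Fintype.piFinset t).filter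
            (fun q => ¬ A < ((|((q h).1 : ℤ) - ((q k).1 : ℤ)| *
              |((q h).2 : ℤ) - ((q k).2 : ℤ)| : ℤ) : ℝ))).card : ℝ) := hcard1
      _ ≤ ∑ k ∈ Finset.univ.erase h,
            rho W n T A s (max (h.val - k.val) (k.val - h.val)) * ((W*n : ℕ):ℝ)^(m-1) :=
          Finset.sum_le_sum hkb
      _ = (∑ k ∈ Finset.univ.erase h,
            rho W n T A s (max (h.val - k.val) (k.val - h.val))) * ((W*n : ℕ):ℝ)^(m-1) := by
          rw [Finset.sum_mul]
      _ ≤ ((W:ℝ)*n/8) * ((W*n : ℕ):ℝ)^(m-1) := by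
          apply mul_le_mul_of_nonneg_right hsum2 (by positivity)
      _ = (((W*n)^m : ℕ) : ℝ)/8 := by
          have h1 : (((W*n)^m : ℕ):ℝ) = (((W*n : ℕ)):ℝ)^m := by push_cast; ring
          have h2 : (((W*n : ℕ)):ℝ)^m = (((W*n : ℕ)):ℝ)^(m-1) * (((W*n : ℕ)):ℝ) := by
            rw [← pow_succ]
            congr 1
            omega
          have hx : ((W*n : ℕ):ℝ) = (W:ℝ)*n := by push_cast; ring
          rw [h1, h2, hx]
          ring
  -- Markov argument
  set G : (Fin m → ℕ×ℕ) → ℕ :=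
    fun q => (Finset.univ.filter (fun h : Fin m => wellSep A q h)).card with hG
  set B : (Fin m → ℕ×ℕ) → ℕ :=
    fun q => (Finset.univ.filter (fun h : Fin m => ¬ wellSep A q h)).card with hB
  have hGB : ∀ q, G q + B q = m := by
    intro q
    rw [hG, hB]
    simp only []
    rw [Finset.card_filter_add_card_filter_not]
    simp
  have hsumB : ∑ q ∈ Fintype.piFinset t, (B q : ℝ) ≤ (m:ℝ) * ((((W*n)^m : ℕ)):ℝ)/8 := by
    have h1 : ∀ q, (B q : ℝ) = ∑ h : Fin m, if ¬ wellSep A q h then (1:ℝ) else 0 := by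
      intro q
      rw [hB]
      simp only []
      rw [Finset.sum_boole]
    calc ∑ q ∈ Fintype.piFinset t, (B q:ℝ)
        = ∑ q ∈ Fintype.piFinset t, ∑ h : Fin m, (if ¬ wellSep A q h then (1:ℝ) else 0) :=
          Finset.sum_congr rfl (fun q _ => h1 q)
      _ = ∑ h : Fin m, ∑ q ∈ Fintype.piFinset t, (if ¬ wellSep A q h then (1:ℝ) else 0) :=
          Finset.sum_comm
      _ = ∑ h : Fin m, (((Fintype.piFinset t).filter (fun q => ¬ wellSep A q h)).card : ℝ) :=
          Finset.sum_congr rfl (fun h _ => by rw [Finset.sum_boole])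
      _ ≤ ∑ _h : Fin m, ((((W*n)^m:ℕ)):ℝ)/8 := Finset.sum_le_sum (fun h _ => hNh h)
      _ = (m:ℝ) * ((((W*n)^m : ℕ)):ℝ)/8 := by
          rw [Finset.sum_const, Finset.card_univ, Fintype.card_fin, nsmul_eq_mul]
          ring
  set Bad := (Fintype.piFinset t).filter (fun q => ¬ ((m:ℝ)/2 ≤ (G q : ℝ))) with hBad
  have hBadcard : (Bad.card : ℝ) ≤ ((((W*n)^m : ℕ)):ℝ)/4 := by
    have h2 : ∀ q ∈ Bad, ((m:ℝ)/2) ≤ (B q : ℝ) := by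
      intro q hq
      rw [hBad, Finset.mem_filter] at hq
      have h3 := hq.2
      push_neg at h3
      have h4 : (G q : ℝ) + (B q : ℝ) = m := by exact_mod_cast hGB q
      linarith
    have h5 : ((m:ℝ)/2) * Bad.card ≤ ∑ q ∈ Fintype.piFinset t, (B q : ℝ) := by
      calc ((m:ℝ)/2) * Bad.card = ∑ _q ∈ Bad, ((m:ℝ)/2) := by
            rw [Finset.sum_const, nsmul_eq_mul]
            ring
        _ ≤ ∑ q ∈ Bad, (B q : ℝ) := Finset.sum_le_sum h2
        _ ≤ ∑ q ∈ Fintype.piFinset t, (B q : ℝ) :=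
            Finset.sum_le_sum_of_subset_of_nonneg (Finset.filter_subset _ _)
              (fun q _ _ => Nat.cast_nonneg _)
    have hm0 : (0:ℝ) < m := by exact_mod_cast hm
    nlinarith [hsumB]
  have hGoodBad : ((((Fintype.piFinset t).filter
        (fun q => (m : ℝ) / 2 ≤ (G q : ℝ))).card : ℝ)) + (Bad.card : ℝ)
      = (((W*n)^m : ℕ) : ℝ) := by
    have h6 := Finset.card_filter_add_card_filter_not
      (s := Fintype.piFinset t) (p := fun q => (m:ℝ)/2 ≤ (G q:ℝ))
    rw [hΩcard] at h6
    exact_mod_cast h6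
  have hpow0 : (0:ℝ) < (((W*n)^m : ℕ) : ℝ) := by
    have : 0 < (W*n)^m := pow_pos (by positivity) m
    exact_mod_cast this
  rw [hΩ, hΩcard]
  rw [le_div_iff₀ hpow0]
  push_cast at hGoodBad hBadcard ⊢
  linarith
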